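/- Let B be a set, 𝒞 a finite family of subsets of B closed under pairwise intersection, and D = ⋃_{C∈𝒞} C. Then the indicator function of D satisfies 𝟙_D = ∑_{r≥0} ∑_{C₀⊊…⊊C_r, C_i∈𝒞} (−1)^r · 𝟙_{C₀}, i.e., for every x ∈ B, 𝟙_D(x) equals the alternating sum over all strictly increasing chains in 𝒞 of (−1)^r times 𝟙_{C₀}(x), where C₀ is the smallest element of the chain. -/

import Mathlib

open scoped Classical

private lemma sInter_mem_of_closed {B : Type*} (𝒞 : Finset (Set B))
    (hclosed : ∀ C ∈ 𝒞, ∀ C' ∈ 𝒞, C ∩ C' ∈ 𝒞) :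
    ∀ S : Finset (Set B), S.Nonempty → S ⊆ 𝒞 → ⋂₀ (S : Set (Set B)) ∈ 𝒞 := by
  intro S hne hsub
  induction hne using Finset.Nonempty.cons_induction with
  | singleton a => simpa using hsub (by simp)
  | cons a s ha hs ih =>
    have h1 : a ∈ 𝒞 := hsub (by simp)
    have h2 : ⋂₀ (s : Set (Set B)) ∈ 𝒞 := ih (fun y hy => hsub (Finset.mem_cons_of_mem hy))
    have : ⋂₀ ((Finset.cons a s ha : Finset (Set B)) : Set (Set B))
        = a ∩ ⋂₀ (s : Set (Set B)) := by
      simp [Finset.coe_cons, Set.sInter_insert]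
    rw [this]
    exact hclosed a h1 _ h2

/-- For a finite family `𝒞` of subsets of `B` closed under pairwise intersection and
`D = ⋃_{C ∈ 𝒞} C`, the indicator function of `D` equals the alternating sum over all
strictly increasing chains `C₀ ⊊ … ⊊ C_r` in `𝒞` of `(-1)^r · 𝟙_{C₀}`.  Chains are
encoded as nonempty subsets of `𝒞` totally ordered by inclusion; the smallest element
`C₀` of such a chain is its intersection `⋂₀ T`. -/
theorem indicator_union_eq_alternating_chain_sum {B : Type*} (𝒞 : Finset (Set B))
    (hclosed : ∀ C ∈ 𝒞, ∀ C' ∈ 𝒞, C ∩ C' ∈ 𝒞) (x : B) :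
    (if x ∈ ⋃ C ∈ 𝒞, C then (1 : ℤ) else 0) =
    ∑ T ∈ 𝒞.powerset.filter
        (fun T : Finset (Set B) => T.Nonempty ∧ IsChain (· ⊆ ·) (T : Set (Set B))),
      (-1 : ℤ) ^ (T.card - 1) * (if x ∈ ⋂₀ (T : Set (Set B)) then 1 else 0) := by
  classical
  set S : Finset (Set B) := 𝒞.filter (fun C => x ∈ C) with hS
  -- rewrite RHS as sum over chains contained in S
  have hrhs : ∑ T ∈ 𝒞.powerset.filter
        (fun T : Finset (Set B) => T.Nonempty ∧ IsChain (· ⊆ ·) (T : Set (Set B))),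
      (-1 : ℤ) ^ (T.card - 1) * (if x ∈ ⋂₀ (T : Set (Set B)) then 1 else 0) =
      ∑ T ∈ S.powerset.filter
        (fun T : Finset (Set B) => T.Nonempty ∧ IsChain (· ⊆ ·) (T : Set (Set B))),
      (-1 : ℤ) ^ (T.card - 1) := by
    rw [← Finset.sum_filter_of_ne (p := fun T : Finset (Set B) => x ∈ ⋂₀ (T : Set (Set B)))
      (by intro T hT h; by_contra hx; simp [hx] at h)]
    rw [show (𝒞.powerset.filter
        (fun T : Finset (Set B) => T.Nonempty ∧ IsChain (· ⊆ ·) (T : Set (Set B)))).filter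
        (fun T : Finset (Set B) => x ∈ ⋂₀ (T : Set (Set B))) =
        S.powerset.filter
        (fun T : Finset (Set B) => T.Nonempty ∧ IsChain (· ⊆ ·) (T : Set (Set B))) from ?_]
    · apply Finset.sum_congr rfl
      intro T hT
      simp only [Finset.mem_filter, Finset.mem_powerset, hS] at hT
      have hx : x ∈ ⋂₀ (T : Set (Set B)) := by
        rw [Set.mem_sInter]
        intro C hC
        exact (Finset.mem_filter.mp (hT.1 hC)).2
      simp [hx]
    · ext T
      simp only [Finset.mem_filter, Finset.mem_powerset]
      constructor
      · rintro ⟨⟨hsub, hP⟩, hx'⟩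
        rw [Set.mem_sInter] at hx'
        exact ⟨fun C hC => Finset.mem_filter.mpr ⟨hsub hC, hx' C hC⟩, hP⟩
      · rintro ⟨hsub, hP⟩
        refine ⟨⟨fun C hC => (Finset.mem_filter.mp (hsub hC)).1, hP⟩, ?_⟩
        rw [Set.mem_sInter]
        exact fun C hC => (Finset.mem_filter.mp (hsub hC)).2
  rw [hrhs]
  by_cases hx : x ∈ ⋃ C ∈ 𝒞, C
  · -- S is nonempty; let m be its minimum
    rw [if_pos hx]
    have hSne : S.Nonempty := by
      obtain ⟨C, hC, hxC⟩ := Set.mem_iUnion₂.mp hx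
      exact ⟨C, Finset.mem_filter.mpr ⟨hC, hxC⟩⟩
    set m : Set B := ⋂₀ (S : Set (Set B)) with hm
    have hmS : m ∈ S := by
      refine Finset.mem_filter.mpr
        ⟨sInter_mem_of_closed 𝒞 hclosed S hSne (Finset.filter_subset _ _), ?_⟩
      rw [hm, Set.mem_sInter]
      intro C hC
      exact (Finset.mem_filter.mp hC).2
    have hmin : ∀ C ∈ S, m ⊆ C := fun C hC => Set.sInter_subset_of_mem hC
    set P : Finset (Set B) → Prop :=
      fun T => T.Nonempty ∧ IsChain (· ⊆ ·) (T : Set (Set B)) with hP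
    have hsingle : ({m} : Finset (Set B)) ∈ S.powerset.filter P := by
      refine Finset.mem_filter.mpr
        ⟨Finset.mem_powerset.mpr (by simpa using hmS), ⟨m, by simp⟩, ?_⟩
      simp only [Finset.coe_singleton]
      exact Set.Subsingleton.isChain Set.subsingleton_singleton
    rw [← Finset.add_sum_erase _ _ hsingle]
    have hzero : ∑ T ∈ (S.powerset.filter P).erase {m}, (-1 : ℤ) ^ (T.card - 1) = 0 := by
      set s := (S.powerset.filter P).erase {m} with hs
      have hmem : ∀ T ∈ s, T ⊆ S ∧ P T ∧ T ≠ {m} := by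
        intro T hT
        rw [hs, Finset.mem_erase, Finset.mem_filter, Finset.mem_powerset] at hT
        exact ⟨hT.2.1, hT.2.2, hT.1⟩
      refine Finset.sum_involution
        (fun T _ => if m ∈ T then T.erase m else insert m T) ?_ ?_ ?_ ?_
      · -- signs cancel
        intro T hT
        obtain ⟨hTS, ⟨hTne, _⟩, hTm⟩ := hmem T hT
        have h1 : 1 ≤ T.card := Finset.card_pos.mpr hTne
        by_cases h : m ∈ T
        · rw [if_pos h, Finset.card_erase_of_mem h]
          have h2 : 2 ≤ T.card := by
            by_contra hcon
            push_neg at hcon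
            have hc1 : T.card = 1 := by omega
            obtain ⟨a, ha⟩ := Finset.card_eq_one.mp hc1
            apply hTm
            rw [ha]
            rw [ha, Finset.mem_singleton] at h
            rw [h]
          have e1 : T.card - 1 = (T.card - 2) + 1 := by omega
          have e2 : T.card - 1 - 1 = T.card - 2 := by omega
          rw [e2, e1, pow_succ]
          ring
        · rw [if_neg h, Finset.card_insert_of_notMem h]
          have e : T.card + 1 - 1 = (T.card - 1) + 1 := by omega
          rw [e, pow_succ]
          ring
      · -- g T ≠ T
        intro T hT _
        by_cases h : m ∈ T
        · rw [if_pos h]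
          intro hcon
          rw [← hcon] at h
          exact Finset.notMem_erase m T h
        · rw [if_neg h]
          intro hcon
          exact h (hcon ▸ Finset.mem_insert_self m T)
      · -- g maps s to s
        intro T hT
        obtain ⟨hTS, ⟨hTne, hTchain⟩, hTm⟩ := hmem T hT
        by_cases h : m ∈ T
        · rw [if_pos h, hs, Finset.mem_erase, Finset.mem_filter, Finset.mem_powerset]
          have herase_ne : (T.erase m).Nonempty := by
            apply Finset.nonempty_of_ne_empty
            intro hcon
            apply hTm
            ext y
            simp only [Finset.mem_singleton]
            constructor
            · intro hy
              by_contra hym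
              have : y ∈ T.erase m := Finset.mem_erase.mpr ⟨hym, hy⟩
              simp [hcon] at this
            · intro hy
              rw [hy]; exact h
          refine ⟨?_, Finset.Subset.trans (Finset.erase_subset m T) hTS,
            herase_ne, hTchain.mono (by simp [Finset.coe_subset, Finset.erase_subset])⟩
          intro hcon
          have : m ∈ T.erase m := hcon ▸ Finset.mem_singleton_self m
          exact Finset.notMem_erase m T this
        · rw [if_neg h, hs, Finset.mem_erase, Finset.mem_filter, Finset.mem_powerset]
          refine ⟨?_, Finset.insert_subset hmS hTS, Finset.insert_nonempty m T, ?_⟩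
          · intro hcon
            obtain ⟨C, hC⟩ := hTne
            have : C ∈ ({m} : Finset (Set B)) := hcon ▸ Finset.mem_insert_of_mem hC
            rw [Finset.mem_singleton] at this
            exact h (this ▸ hC)
          · rw [Finset.coe_insert]
            refine hTchain.insert ?_
            intro C hC _
            exact Or.inl (hmin C (hTS hC))
      · -- involution
        intro T hT
        by_cases h : m ∈ T
        · rw [if_pos h, if_neg (Finset.notMem_erase m T), Finset.insert_erase h]
        · rw [if_neg h, if_pos (Finset.mem_insert_self m T), Finset.erase_insert h]
    rw [hzero]
    simp
  · rw [if_neg hx]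
    have hSempty : S = ∅ := by
      rw [hS, Finset.filter_eq_empty_iff]
      intro C hC hxC
      exact hx (Set.mem_iUnion₂.mpr ⟨C, hC, hxC⟩)
    rw [hSempty]
    simp [Finset.powerset_empty, Finset.filter_singleton]
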